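/- In the gadget graph G' constructed from G (each edge uv replaced by a 4-vertex zero-weight path uv⁺–uv⁻–vu⁻–vu⁺, plus for each turn (uv,vw) an edge of weight α(uv,vw) between vu⁺ and vw⁺), perfect matchings of G' correspond bijectively to collections of vertex-disjoint simple cycles in G, with the matching weight equal to the total turn cost along the cycles, provided G has maximum degree 3. -/

import Mathlib

open Finset
open scoped Classical

variable {V : Type*} [Fintype V] [DecidableEq V]

/-- The gadget graph `G'` on vertex set `G.Dart × Bool`: for each edge `uv` of `G`,
the dart-vertices `(u→v,+), (u→v,−), (v→u,−), (v→u,+)` form a path of three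
zero-weight edges, and for each turn `(uv, vw)` at `v` there is a weighted edge
between `(v→u,+)` and `(v→w,+)`.  (`+` is `true`, `−` is `false`.) -/
def Gadget (G : SimpleGraph V) : SimpleGraph (G.Dart × Bool) :=
  SimpleGraph.fromRel (fun x y =>
    (x.1 = y.1 ∧ x.2 ≠ y.2) ∨
    (y.1 = x.1.symm ∧ x.2 = false ∧ y.2 = false) ∨
    (x.2 = true ∧ y.2 = true ∧ x.1.toProd.1 = y.1.toProd.1 ∧ x.1.toProd.2 ≠ y.1.toProd.2))

set_option linter.unusedSectionVars false
set_option linter.unusedVariables false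

variable {G : SimpleGraph V}

lemma gadget_adj_ff {d d' : G.Dart} :
    (Gadget G).Adj (d, false) (d', false) ↔ d' = d.symm := by
  simp only [Gadget, SimpleGraph.fromRel_adj]
  constructor
  · rintro ⟨hne, (⟨h1, h2⟩ | ⟨h, -, -⟩ | ⟨h, -⟩) | (⟨h1, h2⟩ | ⟨h, -, -⟩ | ⟨h, -⟩)⟩
    · simp at h2
    · exact h
    · simp at h
    · simp at h2
    · rw [h]; simp
    · simp at h
  · rintro rfl
    refine ⟨?_, Or.inl (Or.inr (Or.inl ⟨rfl, trivial, trivial⟩))⟩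
    simp [Prod.ext_iff, SimpleGraph.Dart.symm_ne d |>.symm]

lemma gadget_adj_tf {d d' : G.Dart} :
    (Gadget G).Adj (d, true) (d', false) ↔ d = d' := by
  simp only [Gadget, SimpleGraph.fromRel_adj]
  constructor
  · rintro ⟨hne, (⟨h1, h2⟩ | ⟨h, h2, -⟩ | ⟨-, h, -⟩) | (⟨h1, h2⟩ | ⟨-, -, h⟩ | ⟨h, -⟩)⟩
    · exact h1
    · simp at h2
    · simp at h
    · exact h1.symm
    · simp at h
    · simp at h
  · rintro rfl
    exact ⟨by simp [Prod.ext_iff], Or.inl (Or.inl ⟨rfl, by simp⟩)⟩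

lemma gadget_adj_ft {d d' : G.Dart} :
    (Gadget G).Adj (d, false) (d', true) ↔ d = d' := by
  rw [(Gadget G).adj_comm, gadget_adj_tf, eq_comm]

lemma gadget_adj_tt {d d' : G.Dart} :
    (Gadget G).Adj (d, true) (d', true) ↔ d.fst = d'.fst ∧ d.snd ≠ d'.snd := by
  simp only [Gadget, SimpleGraph.fromRel_adj]
  constructor
  · rintro ⟨hne, (⟨h1, h2⟩ | ⟨-, h, -⟩ | ⟨-, -, h1, h2⟩) | (⟨h1, h2⟩ | ⟨-, h, -⟩ | ⟨-, -, h1, h2⟩)⟩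
    · simp at h2
    · simp at h
    · exact ⟨h1, h2⟩
    · simp at h2
    · simp at h
    · exact ⟨h1.symm, fun h => h2 h.symm⟩
  · rintro ⟨h1, h2⟩
    refine ⟨?_, Or.inl (Or.inr (Or.inr ⟨trivial, trivial, h1, h2⟩))⟩
    simp only [ne_eq, Prod.mk.injEq, and_true]
    intro h; exact h2 (by rw [h])

lemma exists_dart_of_mem_edgeSet {e : Sym2 V} (he : e ∈ G.edgeSet) :
    ∃ d : G.Dart, d.edge = e := by
  induction e with
  | _ u w => exact ⟨⟨(u, w), he⟩, rfl⟩

lemma edge_eq_iff_of_fst_eq {d d' : G.Dart} (h : d.fst = d'.fst) :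
    d.edge = d'.edge ↔ d = d' := by
  rw [SimpleGraph.dart_edge_eq_iff]
  constructor
  · rintro (rfl | rfl)
    · rfl
    · exact absurd h d'.symm.fst_ne_snd
  · exact Or.inl

lemma fst_mem_edge (d : G.Dart) : d.fst ∈ d.edge := Sym2.mem_mk_left _ _

variable [DecidableRel G.Adj] in
lemma inc_inter_eq_image (p : G.Dart → Prop) [DecidablePred p] (hp : ∀ d : G.Dart, p d.symm ↔ p d)
    (S : Finset (Sym2 V))
    (hS : ∀ e, e ∈ S ↔ e ∈ G.edgeFinset ∧ ∃ d : G.Dart, d.edge = e ∧ p d) (v : V) :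
    G.incidenceFinset v ∩ S =
      (Finset.univ.filter fun d : G.Dart => d.fst = v ∧ p d).image SimpleGraph.Dart.edge := by
  ext e
  simp only [Finset.mem_inter, SimpleGraph.mem_incidenceFinset, Finset.mem_image,
    Finset.mem_filter, Finset.mem_univ, true_and]
  constructor
  · rintro ⟨⟨heE, hve⟩, heS⟩
    obtain ⟨-, d, rfl, hpd⟩ := (hS e).mp heS
    rcases Sym2.mem_iff.mp hve with h | h
    · exact ⟨d, ⟨h.symm, hpd⟩, rfl⟩
    · exact ⟨d.symm, ⟨h.symm, (hp d).mpr hpd⟩, d.edge_symm⟩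
  · rintro ⟨d, ⟨rfl, hpd⟩, rfl⟩
    refine ⟨⟨d.edge_mem, fst_mem_edge d⟩, (hS _).mpr ⟨?_, d, rfl, hpd⟩⟩
    rw [SimpleGraph.mem_edgeFinset]; exact d.edge_mem

variable [DecidableRel G.Adj] in
lemma card_inc_inter (p : G.Dart → Prop) [DecidablePred p] (hp : ∀ d : G.Dart, p d.symm ↔ p d)
    (S : Finset (Sym2 V))
    (hS : ∀ e, e ∈ S ↔ e ∈ G.edgeFinset ∧ ∃ d : G.Dart, d.edge = e ∧ p d) (v : V) :
    (G.incidenceFinset v ∩ S).card =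
      (Finset.univ.filter fun d : G.Dart => d.fst = v ∧ p d).card := by
  rw [inc_inter_eq_image p hp S hS v]
  apply Finset.card_image_of_injOn
  intro d hd d' hd' he
  simp only [Finset.coe_filter, Set.mem_setOf_eq] at hd hd'
  exact (edge_eq_iff_of_fst_eq (hd.2.1.trans hd'.2.1.symm)).mp he

lemma filter_card_le_degree [DecidableRel G.Adj] (p : G.Dart → Prop) (v : V) :
    (Finset.univ.filter fun d : G.Dart => d.fst = v ∧ p d).card ≤ G.degree v := by
  rw [← SimpleGraph.dart_fst_fiber_card_eq_degree]
  exact Finset.card_le_card (fun d hd => by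
    simp only [Finset.mem_filter] at hd ⊢
    exact ⟨hd.1, hd.2.1⟩)

section Matching

variable [DecidableRel G.Adj] {M : (Gadget G).Subgraph}

/-- `d`'s middle edge is matched. -/
def Sel (M : (Gadget G).Subgraph) (d : G.Dart) : Prop :=
  M.Adj (d, false) (d.symm, false)

lemma sel_symm (d : G.Dart) : Sel M d.symm ↔ Sel M d := by
  unfold Sel
  rw [SimpleGraph.Dart.symm_symm]
  exact ⟨fun h => h.symm, fun h => h.symm⟩

variable (hM : ∀ x, ∃! y, M.Adj x y)
include hM

lemma turn_imp_sel {d d' : G.Dart} (h : M.Adj (d, true) (d', true)) : Sel M d := by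
  by_contra hns
  -- (d, false)'s partner: must be (d, true) or (d.symm, false)
  obtain ⟨y, hy, -⟩ := hM (d, false)
  have hgy := M.adj_sub hy
  obtain ⟨e, b⟩ := y
  cases b
  · rw [gadget_adj_ff] at hgy
    subst hgy
    exact hns hy
  · rw [gadget_adj_ft] at hgy
    subst hgy
    -- M.Adj (d,true) (d,false) and M.Adj (d,true)(d',true): uniqueness
    have := (hM (d, true)).unique hy.symm h
    simp at this

lemma sel_imp_turn {d : G.Dart} (h : Sel M d) :
    ∃ d' : G.Dart, M.Adj (d, true) (d', true) := by
  obtain ⟨y, hy, -⟩ := hM (d, true)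
  have hgy := M.adj_sub hy
  obtain ⟨e, b⟩ := y
  cases b
  · rw [gadget_adj_tf] at hgy
    subst hgy
    have := (hM (d, false)).unique hy.symm h
    simp [Prod.ext_iff] at this
  · exact ⟨e, hy⟩

lemma turn_fst_eq {d d' : G.Dart} (h : M.Adj (d, true) (d', true)) : d.fst = d'.fst :=
  ((gadget_adj_tt).mp (M.adj_sub h)).1

/-- Key structural fact at each vertex: the set of selected darts out of `v`
has 0 or 2 elements, and any two distinct selected darts at `v` are matched
by a turn edge. -/
lemma structure_at (hmax : ∀ v, G.degree v ≤ 3) (v : V) :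
    ((Finset.univ.filter fun d : G.Dart => d.fst = v ∧ Sel M d).card = 0 ∨
     (Finset.univ.filter fun d : G.Dart => d.fst = v ∧ Sel M d).card = 2) ∧
    ∀ d ∈ (Finset.univ.filter fun d : G.Dart => d.fst = v ∧ Sel M d),
      ∀ d' ∈ (Finset.univ.filter fun d : G.Dart => d.fst = v ∧ Sel M d),
        d ≠ d' → M.Adj (d, true) (d', true) := by
  set T := Finset.univ.filter fun d : G.Dart => d.fst = v ∧ Sel M d with hT
  rcases T.eq_empty_or_nonempty with he | ⟨a, ha⟩
  · rw [he]; simp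
  have hmemT : ∀ d : G.Dart, d ∈ T ↔ d.fst = v ∧ Sel M d := by
    intro d; rw [hT]; simp
  obtain ⟨hav, hasel⟩ := (hmemT a).mp ha
  obtain ⟨b, hab⟩ := sel_imp_turn hM hasel
  have hbT : b ∈ T := (hmemT b).mpr ⟨(turn_fst_eq hM hab).symm.trans hav, turn_imp_sel hM hab.symm⟩
  have hba : b ≠ a := fun h => (M.adj_sub hab).ne (by rw [h])
  have hTab : T = {a, b} := by
    apply Finset.Subset.antisymm
    · intro c hc
      by_contra hcn
      simp only [Finset.mem_insert, Finset.mem_singleton] at hcn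
      push_neg at hcn
      obtain ⟨hca, hcb⟩ := hcn
      obtain ⟨hcv, hcsel⟩ := (hmemT c).mp hc
      obtain ⟨c', hcc'⟩ := sel_imp_turn hM hcsel
      have hc'T : c' ∈ T :=
        (hmemT c').mpr ⟨(turn_fst_eq hM hcc').symm.trans hcv, turn_imp_sel hM hcc'.symm⟩
      have hc'c : c' ≠ c := fun h => (M.adj_sub hcc').ne (by rw [h])
      have hc'a : c' ≠ a := by
        intro heq
        rw [heq] at hcc'
        have := (hM (a, true)).unique hcc'.symm hab
        simp only [Prod.mk.injEq, and_true] at this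
        exact hcb this
      have hc'b : c' ≠ b := by
        intro heq
        rw [heq] at hcc'
        have := (hM (b, true)).unique hcc'.symm hab.symm
        simp only [Prod.mk.injEq, and_true] at this
        exact hca this
      have hsub : ({a, b, c, c'} : Finset G.Dart) ⊆ T := by
        intro x hx
        simp only [Finset.mem_insert, Finset.mem_singleton] at hx
        rcases hx with rfl | rfl | rfl | rfl
        exacts [ha, hbT, hc, hc'T]
      have hcard4 : ({a, b, c, c'} : Finset G.Dart).card = 4 := by
        rw [Finset.card_insert_of_notMem (by simp [Ne.symm hba, Ne.symm hca, Ne.symm hc'a]),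
            Finset.card_insert_of_notMem (by simp [Ne.symm hcb, Ne.symm hc'b]),
            Finset.card_insert_of_notMem (by simp [Ne.symm hc'c])]
        simp
      have hle : T.card ≤ 3 := le_trans (filter_card_le_degree _ v) (hmax v)
      have := Finset.card_le_card hsub
      omega
    · intro x hx
      simp only [Finset.mem_insert, Finset.mem_singleton] at hx
      rcases hx with rfl | rfl
      exacts [ha, hbT]
  constructor
  · right
    rw [hTab, Finset.card_pair (Ne.symm hba)]
  · intro d hd d' hd' hdd'
    rw [hTab] at hd hd'
    simp only [Finset.mem_insert, Finset.mem_singleton] at hd hd'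
    rcases hd with rfl | rfl <;> rcases hd' with rfl | rfl
    · exact absurd rfl hdd'
    · exact hab
    · exact hab.symm
    · exact absurd rfl hdd'

end Matching


/-- The weight of a subgraph (matching) `M` of the gadget graph: each matched
weighted edge `(v→u,+)–(v→w,+)` contributes the turn cost `α(uv, vw)`; path
edges contribute `0`.  (The factor `1/2` accounts for counting ordered pairs.) -/
noncomputable def gadgetWeight (G : SimpleGraph V) [DecidableRel G.Adj]
    (α : Sym2 V → Sym2 V → ℝ) (M : (Gadget G).Subgraph) : ℝ :=
  (1 / 2) * ∑ x : G.Dart × Bool, ∑ y : G.Dart × Bool,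
    if M.Adj x y ∧ x.2 = true ∧ y.2 = true then α x.1.edge y.1.edge else 0

/-- The set of edges of `G` selected by `M`: those whose middle path edge
`(u→v,−)–(v→u,−)` belongs to `M`. -/
noncomputable def selectedEdges (G : SimpleGraph V) [DecidableRel G.Adj]
    (M : (Gadget G).Subgraph) : Finset (Sym2 V) :=
  G.edgeFinset.filter (fun e => ∃ d : G.Dart, d.edge = e ∧ M.Adj (d, false) (d.symm, false))

/-- `S` is the edge set of a vertex-disjoint union of simple cycles in `G`:
every vertex is incident to either `0` or `2` edges of `S`. -/
def IsCycleUnion (G : SimpleGraph V) [DecidableRel G.Adj] (S : Finset (Sym2 V)) : Prop :=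
  ↑S ⊆ G.edgeSet ∧
    ∀ v, (G.incidenceFinset v ∩ S).card = 0 ∨ (G.incidenceFinset v ∩ S).card = 2

/-- The total turn cost along the cycles with edge set `S`: at each vertex with two
incident `S`-edges `e ≠ f`, the cycle uses the turn `(e, f)`. -/
noncomputable def cycleTurnCost (G : SimpleGraph V) [DecidableRel G.Adj]
    (α : Sym2 V → Sym2 V → ℝ) (S : Finset (Sym2 V)) : ℝ :=
  (1 / 2) * ∑ v : V, ∑ e ∈ G.incidenceFinset v ∩ S, ∑ f ∈ G.incidenceFinset v ∩ S,
    if e ≠ f then α e f else 0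

section Part1

variable [DecidableRel G.Adj] {M : (Gadget G).Subgraph}

lemma selectedEdges_spec (M : (Gadget G).Subgraph) :
    ∀ e, e ∈ selectedEdges G M ↔ e ∈ G.edgeFinset ∧ ∃ d : G.Dart, d.edge = e ∧ Sel M d := by
  intro e
  simp [selectedEdges, Sel, Finset.mem_filter]

lemma part1 (hmax : ∀ v, G.degree v ≤ 3) (α : Sym2 V → Sym2 V → ℝ)
    (hpm : M.IsPerfectMatching) :
    IsCycleUnion G (selectedEdges G M) ∧
      gadgetWeight G α M = cycleTurnCost G α (selectedEdges G M) := by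
  have hM : ∀ x, ∃! y, M.Adj x y := SimpleGraph.Subgraph.isPerfectMatching_iff.mp hpm
  have hcard := fun v => card_inc_inter (Sel M) sel_symm (selectedEdges G M) (selectedEdges_spec M) v
  constructor
  · constructor
    · intro e he
      have := Finset.mem_filter.mp he
      exact SimpleGraph.mem_edgeFinset.mp this.1
    · intro v
      rw [hcard v]
      exact (structure_at hM hmax v).1
  · unfold gadgetWeight cycleTurnCost
    congr 1
    have step1 : (∑ x : G.Dart × Bool, ∑ y : G.Dart × Bool,
        if M.Adj x y ∧ x.2 = true ∧ y.2 = true then α x.1.edge y.1.edge else 0)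
        = ∑ d : G.Dart, ∑ d' : G.Dart,
            if M.Adj (d, true) (d', true) then α d.edge d'.edge else 0 := by
      simp only [Fintype.sum_prod_type, Fintype.sum_bool]
      simp
    rw [step1, ← Finset.sum_fiberwise Finset.univ (fun d : G.Dart => d.fst)
      (fun d : G.Dart => ∑ d' : G.Dart,
        if M.Adj (d, true) (d', true) then α d.edge d'.edge else 0)]
    refine Finset.sum_congr rfl fun v _ => ?_
    -- per-vertex identity
    set T := Finset.univ.filter fun d : G.Dart => d.fst = v ∧ Sel M d with hTdef
    have hmemT : ∀ d : G.Dart, d ∈ T ↔ d.fst = v ∧ Sel M d := by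
      intro d; rw [hTdef]; simp
    rw [inc_inter_eq_image (Sel M) sel_symm _ (selectedEdges_spec M) v]
    have hinj : ∀ x ∈ T, ∀ y ∈ T, x.edge = y.edge → x = y := by
      intro x hx y hy hxy
      exact (edge_eq_iff_of_fst_eq
        (((hmemT x).mp hx).1.trans ((hmemT y).mp hy).1.symm)).mp hxy
    rw [Finset.sum_image hinj]
    have hsum2 : ∀ d ∈ T, (∑ f ∈ T.image SimpleGraph.Dart.edge,
        if d.edge ≠ f then α d.edge f else 0)
        = ∑ d' ∈ T, if d.edge ≠ d'.edge then α d.edge d'.edge else 0 :=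
      fun d _ => Finset.sum_image hinj
    rw [Finset.sum_congr rfl hsum2]
    -- now RHS is a sum over T × T; transform LHS similarly
    have hvanish1 : ∀ d : G.Dart, d.fst = v → ∀ d' : G.Dart, d'.fst ≠ v →
        (if M.Adj (d, true) (d', true) then α d.edge d'.edge else 0) = 0 := by
      intro d hd d' hd'
      rw [if_neg]
      intro h
      exact hd' ((turn_fst_eq hM h.symm).trans hd)
    have step3 : ∀ d ∈ (Finset.univ.filter fun d : G.Dart => d.fst = v),
        (∑ d' : G.Dart, if M.Adj (d, true) (d', true) then α d.edge d'.edge else 0)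
        = ∑ d' ∈ (Finset.univ.filter fun d : G.Dart => d.fst = v),
            if M.Adj (d, true) (d', true) then α d.edge d'.edge else 0 := by
      intro d hd
      rw [Finset.mem_filter] at hd
      refine (Finset.sum_subset (Finset.subset_univ _) ?_).symm
      intro d' _ hd'
      simp only [Finset.mem_filter, Finset.mem_univ, true_and] at hd'
      exact hvanish1 d hd.2 d' hd'
    rw [Finset.sum_congr rfl step3]
    -- restrict outer sum from fiber to T
    have hTsub : T ⊆ Finset.univ.filter fun d : G.Dart => d.fst = v := by
      intro d hd
      rw [hmemT] at hd
      simp [hd.1]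
    rw [← Finset.sum_subset hTsub (by
      intro d hd hdT
      simp only [Finset.mem_filter, Finset.mem_univ, true_and] at hd
      rw [hmemT] at hdT
      apply Finset.sum_eq_zero
      intro d' _
      rw [if_neg]
      intro h
      exact hdT ⟨hd, turn_imp_sel hM h⟩)]
    -- restrict inner sums from fiber to T
    have step4 : ∀ d ∈ T,
        (∑ d' ∈ (Finset.univ.filter fun d : G.Dart => d.fst = v),
            if M.Adj (d, true) (d', true) then α d.edge d'.edge else 0)
        = ∑ d' ∈ T, if M.Adj (d, true) (d', true) then α d.edge d'.edge else 0 := by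
      intro d _
      refine (Finset.sum_subset hTsub ?_).symm
      intro d' hd' hd'T
      simp only [Finset.mem_filter, Finset.mem_univ, true_and] at hd'
      rw [hmemT] at hd'T
      rw [if_neg]
      intro h
      exact hd'T ⟨hd', turn_imp_sel hM h.symm⟩
    rw [Finset.sum_congr rfl step4]
    -- pointwise on T × T
    refine Finset.sum_congr rfl fun d hd => Finset.sum_congr rfl fun d' hd' => ?_
    have hiff : M.Adj (d, true) (d', true) ↔ d.edge ≠ d'.edge := by
      constructor
      · intro h hedge
        have : d = d' := hinj d hd d' hd' hedge
        exact (M.adj_sub h).ne (by rw [this])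
      · intro hne
        exact (structure_at hM hmax v).2 d hd d' hd'
          (fun h => hne (by rw [h]))
    by_cases h : M.Adj (d, true) (d', true)
    · rw [if_pos h, if_pos (hiff.mp h)]
    · rw [if_neg h, if_neg (fun hn => h (hiff.mpr hn))]

end Part1

section Part2

variable [DecidableRel G.Adj]

/-- The matching relation built from a cycle-union edge set `S`. -/
def matchRel (S : Finset (Sym2 V)) (x y : G.Dart × Bool) : Prop :=
  (x.2 = false ∧ y.2 = false ∧ y.1 = x.1.symm ∧ x.1.edge ∈ S) ∨
  (x.2 ≠ y.2 ∧ x.1 = y.1 ∧ x.1.edge ∉ S) ∨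
  (x.2 = true ∧ y.2 = true ∧ x.1.fst = y.1.fst ∧ x.1 ≠ y.1 ∧
    x.1.edge ∈ S ∧ y.1.edge ∈ S)

lemma matchRel_symm (S : Finset (Sym2 V)) {x y : G.Dart × Bool}
    (h : matchRel S x y) : matchRel S y x := by
  obtain ⟨h1, h2, h3, h4⟩ | ⟨h1, h2, h3⟩ | ⟨h1, h2, h3, h4, h5, h6⟩ := h
  · refine Or.inl ⟨h2, h1, ?_, ?_⟩
    · rw [h3, SimpleGraph.Dart.symm_symm]
    · rw [h3, SimpleGraph.Dart.edge_symm]; exact h4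
  · exact Or.inr (Or.inl ⟨h1.symm, h2.symm, h2 ▸ h3⟩)
  · exact Or.inr (Or.inr ⟨h2, h1, h3.symm, h4.symm, h6, h5⟩)

lemma matchRel_sub (S : Finset (Sym2 V)) {x y : G.Dart × Bool}
    (h : matchRel S x y) : (Gadget G).Adj x y := by
  obtain ⟨d, b⟩ := x
  obtain ⟨d', b'⟩ := y
  obtain ⟨h1, h2, h3, h4⟩ | ⟨h1, h2, h3⟩ | ⟨h1, h2, h3, h4, h5, h6⟩ := h
  · simp only at h1 h2 h3
    subst h1; subst h2
    exact gadget_adj_ff.mpr h3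
  · simp only at h1 h2 h3
    subst h2
    cases b <;> cases b'
    · simp at h1
    · exact gadget_adj_ft.mpr rfl
    · exact gadget_adj_tf.mpr rfl
    · simp at h1
  · simp only at h1 h2 h3 h4
    subst h1; subst h2
    refine gadget_adj_tt.mpr ⟨h3, fun hsnd => h4 ?_⟩
    exact SimpleGraph.Dart.ext _ _ (Prod.ext h3 hsnd)

/-- The perfect matching of the gadget graph built from `S`. -/
def mkM (S : Finset (Sym2 V)) : (Gadget G).Subgraph where
  verts := Set.univ
  Adj := matchRel S
  adj_sub := matchRel_sub S
  edge_vert := fun _ => Set.mem_univ _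
  symm := ⟨fun _ _ => matchRel_symm S⟩

lemma mkM_adj {S : Finset (Sym2 V)} {x y : G.Dart × Bool} :
    (mkM (G := G) S).Adj x y ↔ matchRel S x y := Iff.rfl

end Part2

section Part2b

variable [DecidableRel G.Adj]

lemma cycleUnion_spec {S : Finset (Sym2 V)} (hS : IsCycleUnion G S) :
    ∀ e, e ∈ S ↔ e ∈ G.edgeFinset ∧ ∃ d : G.Dart, d.edge = e ∧ d.edge ∈ S := by
  intro e
  constructor
  · intro he
    have heE : e ∈ G.edgeSet := hS.1 he
    obtain ⟨d, hd⟩ := exists_dart_of_mem_edgeSet heE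
    exact ⟨SimpleGraph.mem_edgeFinset.mpr heE, d, hd, hd ▸ he⟩
  · rintro ⟨-, d, rfl, h⟩
    exact h

lemma partner {S : Finset (Sym2 V)} (hS : IsCycleUnion G S) {d : G.Dart}
    (hd : d.edge ∈ S) :
    ∃! d' : G.Dart, d'.fst = d.fst ∧ d'.edge ∈ S ∧ d' ≠ d := by
  have hsymmS : ∀ d : G.Dart, d.symm.edge ∈ S ↔ d.edge ∈ S := by simp
  have hcard := card_inc_inter (fun d : G.Dart => d.edge ∈ S) hsymmS S
    (cycleUnion_spec hS) d.fst
  set T := Finset.univ.filter fun d' : G.Dart => d'.fst = d.fst ∧ d'.edge ∈ S with hT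
  have hdT : d ∈ T := by rw [hT]; simp [hd]
  have hT2 : T.card = 2 := by
    rcases hS.2 d.fst with h | h
    · rw [hcard] at h
      exact absurd (Finset.card_eq_zero.mp h ▸ hdT) (Finset.notMem_empty d)
    · rw [hcard] at h
      exact h
  obtain ⟨a, b, hab, hTab⟩ := Finset.card_eq_two.mp hT2
  have hmemT : ∀ c : G.Dart, c ∈ T ↔ c.fst = d.fst ∧ c.edge ∈ S := by
    intro c; rw [hT]; simp
  have haT := (hmemT a).mp (hTab ▸ Finset.mem_insert_self a {b})
  have hbT := (hmemT b).mp (hTab ▸ Finset.mem_insert_of_mem (Finset.mem_singleton_self b))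
  rw [hTab] at hdT
  simp only [Finset.mem_insert, Finset.mem_singleton] at hdT
  have huniq : ∀ c : G.Dart, c.fst = d.fst ∧ c.edge ∈ S ∧ c ≠ d → c ∈ T :=
    fun c hc => (hmemT c).mpr ⟨hc.1, hc.2.1⟩
  rcases hdT with rfl | rfl
  · refine ⟨b, ⟨hbT.1, hbT.2, Ne.symm hab⟩, fun c hc => ?_⟩
    have := huniq c hc
    rw [hTab] at this
    simp only [Finset.mem_insert, Finset.mem_singleton] at this
    rcases this with rfl | rfl
    · exact absurd rfl hc.2.2
    · rfl
  · refine ⟨a, ⟨haT.1, haT.2, hab⟩, fun c hc => ?_⟩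
    have := huniq c hc
    rw [hTab] at this
    simp only [Finset.mem_insert, Finset.mem_singleton] at this
    rcases this with rfl | rfl
    · rfl
    · exact absurd rfl hc.2.2

lemma mkM_isPerfectMatching {S : Finset (Sym2 V)} (hS : IsCycleUnion G S) :
    (mkM (G := G) S).IsPerfectMatching := by
  rw [SimpleGraph.Subgraph.isPerfectMatching_iff]
  rintro ⟨d, b⟩
  by_cases hd : d.edge ∈ S
  · cases b
    · refine ⟨(d.symm, false), Or.inl ⟨rfl, rfl, rfl, hd⟩, ?_⟩
      rintro ⟨d', b'⟩ h
      obtain ⟨-, hb', hd', -⟩ | ⟨-, -, hnS⟩ | ⟨hx, -⟩ := h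
      · simp only at hb' hd'
        subst hb'; subst hd'; rfl
      · exact absurd hd hnS
      · simp at hx
    · obtain ⟨p, ⟨hpf, hpS, hpd⟩, hup⟩ := partner hS hd
      refine ⟨(p, true), Or.inr (Or.inr ⟨rfl, rfl, hpf.symm, Ne.symm hpd, hd, hpS⟩), ?_⟩
      rintro ⟨d', b'⟩ h
      obtain ⟨hx, -⟩ | ⟨-, -, hnS⟩ | ⟨-, hb', hfst, hne, -, hd'S⟩ := h
      · simp at hx
      · exact absurd hd hnS
      · simp only at hb' hfst hne hd'S
        subst hb'
        rw [hup d' ⟨hfst.symm, hd'S, Ne.symm hne⟩]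
  · cases b
    · refine ⟨(d, true), Or.inr (Or.inl ⟨by simp, rfl, hd⟩), ?_⟩
      rintro ⟨d', b'⟩ h
      obtain ⟨-, -, -, hin⟩ | ⟨hb', hdd', -⟩ | ⟨hx, -⟩ := h
      · exact absurd hin hd
      · simp only at hb' hdd'
        subst hdd'
        cases b'
        · simp at hb'
        · rfl
      · simp at hx
    · refine ⟨(d, false), Or.inr (Or.inl ⟨by simp, rfl, hd⟩), ?_⟩
      rintro ⟨d', b'⟩ h
      obtain ⟨hx, -⟩ | ⟨hb', hdd', -⟩ | ⟨-, -, -, -, hin, -⟩ := h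
      · simp at hx
      · simp only at hb' hdd'
        subst hdd'
        cases b'
        · rfl
        · simp at hb'
      · exact absurd hin hd

lemma selectedEdges_mkM {S : Finset (Sym2 V)} (hS : IsCycleUnion G S) :
    selectedEdges G (mkM (G := G) S) = S := by
  ext e
  rw [selectedEdges, Finset.mem_filter]
  constructor
  · rintro ⟨heE, d, rfl, hadj⟩
    obtain ⟨-, -, -, hin⟩ | ⟨hb, -, -⟩ | ⟨-, hx, -⟩ := hadj
    · exact hin
    · simp at hb
    · simp at hx
  · intro he
    obtain ⟨heE, d, hde, hdS⟩ := (cycleUnion_spec hS e).mp he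
    exact ⟨heE, d, hde, Or.inl ⟨rfl, rfl, rfl, hdS⟩⟩

end Part2b

/-- Perfect matchings of the gadget graph `G'` correspond to vertex-disjoint unions
of simple cycles in `G` (for `G` of maximum degree 3), with matching weight equal
to the total turn cost along the cycles. -/
theorem gadget_matching_iff_cycles
    (G : SimpleGraph V) [DecidableRel G.Adj] (hmax : ∀ v, G.degree v ≤ 3)
    (α : Sym2 V → Sym2 V → ℝ) (hsym : ∀ e f, α e f = α f e) (hnn : ∀ e f, 0 ≤ α e f) :
    (∀ M : (Gadget G).Subgraph, M.IsPerfectMatching →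
        IsCycleUnion G (selectedEdges G M) ∧
          gadgetWeight G α M = cycleTurnCost G α (selectedEdges G M)) ∧
    (∀ S : Finset (Sym2 V), IsCycleUnion G S →
        ∃ M : (Gadget G).Subgraph, M.IsPerfectMatching ∧ selectedEdges G M = S ∧
          gadgetWeight G α M = cycleTurnCost G α S) := by
  constructor
  · intro M hpm
    exact part1 hmax α hpm
  · intro S hS
    refine ⟨mkM S, mkM_isPerfectMatching hS, selectedEdges_mkM hS, ?_⟩
    have h := part1 (M := mkM (G := G) S) hmax α (mkM_isPerfectMatching hS)
    rw [selectedEdges_mkM hS] at h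
    exact h.2
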